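/- If ∑_{t=1}^∞ d_t = ∞, then every equilibrium is bubbleless. -/

import Mathlib

open Filter Topology Set

noncomputable section

lemma fprime_anti (f' f'' : ℝ → ℝ)
    (hd : ∀ k > (0:ℝ), HasDerivAt f' (f'' k) k)
    (hneg : ∀ k > (0:ℝ), f'' k < 0) :
    StrictAntiOn f' (Ioi 0) := by
  apply strictAntiOn_of_deriv_neg (convex_Ioi 0)
  · exact fun x hx => (hd x hx).continuousAt.continuousWithinAt
  · intro x hx
    rw [interior_Ioi] at hx
    rw [(hd x hx).deriv]
    exact hneg x hx

lemma w_pos (f f' f'' : ℝ → ℝ)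
    (hfpos : ∀ k > (0:ℝ), 0 < f k)
    (hdf : ∀ k > (0:ℝ), HasDerivAt f (f' k) k)
    (hdf' : ∀ k > (0:ℝ), HasDerivAt f' (f'' k) k)
    (hf'pos : ∀ k > (0:ℝ), 0 < f' k)
    (hneg : ∀ k > (0:ℝ), f'' k < 0)
    (K : ℝ) (hK : 0 < K) : 0 < f K - K * f' K := by
  have hanti := fprime_anti f' f'' hdf' hneg
  have hgd : ∀ x > (0:ℝ), HasDerivAt (fun x => f x - x * f' K) (f' x - f' K) x := by
    intro x hx
    exact (hdf x hx).sub (hasDerivAt_mul_const (f' K))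
  have hgmono : StrictMonoOn (fun x => f x - x * f' K) (Ioc 0 K) := by
    apply strictMonoOn_of_deriv_pos (convex_Ioc 0 K)
    · intro x hx
      exact (hgd x hx.1).continuousAt.continuousWithinAt
    · intro x hx
      rw [interior_Ioc] at hx
      rw [(hgd x hx.1).deriv]
      simp only [sub_pos]
      exact hanti hx.1 hK hx.2
  set g : ℝ → ℝ := fun x => f x - x * f' K with hgdef
  have key : ∀ y, y ∈ Ioc (0:ℝ) K → 0 ≤ g y := by
    intro y hy
    by_contra hcon
    push_neg at hcon
    have hfK := hf'pos K hK
    set x := min (y/2) (-(g y)/(2 * f' K)) with hx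
    have hx0 : 0 < x := lt_min (by linarith [hy.1]) (div_pos (by linarith) (by linarith))
    have hxy : x < y := lt_of_le_of_lt (min_le_left _ _) (by linarith [hy.1])
    have hxm : x ∈ Ioc (0:ℝ) K := ⟨hx0, le_trans hxy.le hy.2⟩
    have h1 : g x < g y := hgmono hxm hy hxy
    have h2 : -(x * f' K) < g x := by
      have := hfpos x hx0
      simp only [hgdef]
      linarith
    have h3 : x * f' K ≤ -(g y) / 2 := by
      have hm : x ≤ -(g y)/(2 * f' K) := min_le_right _ _
      calc x * f' K ≤ (-(g y)/(2 * f' K)) * f' K := by nlinarith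
        _ = -(g y) / 2 := by field_simp
    clear_value x
    generalize g x = A at h1 h2 h3
    generalize g y = B at h1 h3 hcon
    linarith
  have h4 : g (K/2) < g K := hgmono ⟨by linarith, by linarith⟩ ⟨hK, le_refl _⟩ (by linarith)
  have h5 := key (K/2) ⟨by linarith, by linarith⟩
  have := lt_of_le_of_lt h5 h4
  simpa [hgdef] using this

lemma lin_bound (f f' f'' : ℝ → ℝ)
    (hdf : ∀ k > (0:ℝ), HasDerivAt f (f' k) k)
    (hdf' : ∀ k > (0:ℝ), HasDerivAt f' (f'' k) k)
    (hneg : ∀ k > (0:ℝ), f'' k < 0)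
    (K : ℝ) (hK : 0 < K) : ∀ x, K ≤ x → f x ≤ f K + f' K * (x - K) := by
  have hanti := fprime_anti f' f'' hdf' hneg
  have hhd : ∀ x > (0:ℝ), HasDerivAt (fun x => f K + f' K * (x - K) - f x) (f' K - f' x) x := by
    intro x hx
    have : HasDerivAt (fun x : ℝ => f K + f' K * (x - K)) (f' K) x := by
      simpa using (((hasDerivAt_id x).sub_const K).const_mul (f' K)).const_add (f K)
    exact this.sub (hdf x hx)
  have hmono : MonotoneOn (fun x => f K + f' K * (x - K) - f x) (Ici K) := by
    apply monotoneOn_of_deriv_nonneg (convex_Ici K)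
    · intro x hx
      exact (hhd x (lt_of_lt_of_le hK hx)).continuousAt.continuousWithinAt
    · intro x hx
      rw [interior_Ici] at hx
      exact (hhd x (lt_trans hK hx)).differentiableAt.differentiableWithinAt
    · intro x hx
      rw [interior_Ici] at hx
      rw [(hhd x (lt_trans hK hx)).deriv]
      simp only [sub_nonneg]
      exact (hanti hK (lt_trans hK hx) hx).le
  intro x hx
  have := hmono self_mem_Ici hx hx
  simp only at this
  linarith

lemma fmono (f f' : ℝ → ℝ)
    (hd : ∀ k > (0:ℝ), HasDerivAt f (f' k) k)
    (hpos : ∀ k > (0:ℝ), 0 < f' k) :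
    StrictMonoOn f (Ioi 0) := by
  apply strictMonoOn_of_deriv_pos (convex_Ioi 0)
  · exact fun x hx => (hd x hx).continuousAt.continuousWithinAt
  · intro x hx
    rw [interior_Ioi] at hx
    rw [(hd x hx).deriv]
    exact hpos x hx


/-- Standing assumptions on the production function `f` with derivative `f'` and
second derivative `f''`: `f : (0,∞) → (0,∞)` is twice continuously differentiable,
`f' > 0`, `f'' < 0`, `f'(k) → ∞` as `k → 0+`, and `lim_{k→∞} f'(k) < G`. -/
def ProdAssump (G : ℝ) (f f' f'' : ℝ → ℝ) : Prop :=
  0 < G ∧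
  (∀ k > (0:ℝ), 0 < f k) ∧
  (∀ k > (0:ℝ), HasDerivAt f (f' k) k) ∧
  (∀ k > (0:ℝ), HasDerivAt f' (f'' k) k) ∧
  ContinuousOn f'' (Ioi 0) ∧
  (∀ k > (0:ℝ), 0 < f' k) ∧
  (∀ k > (0:ℝ), f'' k < 0) ∧
  Tendsto f' (nhdsWithin 0 (Ioi 0)) atTop ∧
  (∃ L < G, Tendsto f' atTop (nhds L))

/-- Standing assumptions on the savings function: continuous, `0 < s(w,R) < w`,
strictly increasing in `w`, nondecreasing in `R`. -/
def SavAssump (s : ℝ → ℝ → ℝ) : Prop :=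
  ContinuousOn (fun wR : ℝ × ℝ => s wR.1 wR.2) (Ioi 0 ×ˢ Ioi 0) ∧
  (∀ w > (0:ℝ), ∀ R > (0:ℝ), 0 < s w R ∧ s w R < w) ∧
  (∀ R > (0:ℝ), StrictMonoOn (fun w => s w R) (Ioi 0)) ∧
  (∀ w > (0:ℝ), MonotoneOn (fun R => s w R) (Ioi 0))

/-- The savings function arises from a continuous, quasi-concave, strictly increasing
utility `U` on `(0,∞)²`: `s w R` is the unique maximizer of `σ ↦ U (w - σ) (R σ)`
over `(0, w)`. -/
def SavFromUtility (s : ℝ → ℝ → ℝ) : Prop :=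
  ∃ U : ℝ → ℝ → ℝ,
    ContinuousOn (fun c : ℝ × ℝ => U c.1 c.2) (Ioi 0 ×ˢ Ioi 0) ∧
    QuasiconcaveOn ℝ (Ioi 0 ×ˢ Ioi 0) (fun c : ℝ × ℝ => U c.1 c.2) ∧
    (∀ c c' : ℝ × ℝ, c ∈ Ioi (0:ℝ) ×ˢ Ioi (0:ℝ) → c' ∈ Ioi (0:ℝ) ×ˢ Ioi (0:ℝ) →
      c.1 ≤ c'.1 → c.2 ≤ c'.2 → c ≠ c' → U c.1 c.2 < U c'.1 c'.2) ∧
    (∀ w > (0:ℝ), ∀ R > (0:ℝ), s w R ∈ Ioo 0 w ∧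
      ∀ σ ∈ Ioo (0:ℝ) w, σ ≠ s w R → U (w - σ) (R * σ) < U (w - s w R) (R * s w R))

/-- An equilibrium: sequences `k, p` with `k t > 0`, `p t ≥ 0`, `k 0 = k₀`,
the capital accumulation equation and the no-arbitrage price equation. -/
def IsEquilibrium (G : ℝ) (f f' : ℝ → ℝ) (s : ℝ → ℝ → ℝ) (k0 : ℝ) (d : ℕ → ℝ)
    (k p : ℕ → ℝ) : Prop :=
  (∀ t, 0 < k t) ∧ (∀ t, 0 ≤ p t) ∧ k 0 = k0 ∧
  (∀ t, G * k (t + 1) + p t = s (f (k t) - k t * f' (k t)) (f' (k (t + 1)))) ∧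
  (∀ t, p (t + 1) = f' (k (t + 1)) / G * p t - d (t + 1))

/-- Arrow–Debreu date-0 price `q_t = 1/(R_1 ⋯ R_t)` where `R_t = f'(k_t)`. -/
def qseq (f' : ℝ → ℝ) (k : ℕ → ℝ) (t : ℕ) : ℝ :=
  (∏ i ∈ Finset.range t, f' (k (i + 1)))⁻¹

/-- Undetrended dividend `D_t = G^t d_t`. -/
def Dseq (G : ℝ) (d : ℕ → ℝ) (t : ℕ) : ℝ := G ^ t * d t

/-- Detrended fundamental value `v_t = G^{-t} q_t^{-1} ∑_{s>t} q_s D_s`. -/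
def fundval (G : ℝ) (f' : ℝ → ℝ) (k : ℕ → ℝ) (d : ℕ → ℝ) (t : ℕ) : ℝ :=
  (G ^ t)⁻¹ * (qseq f' k t)⁻¹ * ∑' n : ℕ, qseq f' k (t + 1 + n) * Dseq G d (t + 1 + n)

/-- Detrended bubble component `b_t = p_t - v_t`. -/
def bubble (G : ℝ) (f' : ℝ → ℝ) (k p : ℕ → ℝ) (d : ℕ → ℝ) (t : ℕ) : ℝ :=
  p t - fundval G f' k d t

/-- An equilibrium is bubbleless if `b_t = 0` for all `t`. -/
def Bubbleless (G : ℝ) (f' : ℝ → ℝ) (k p : ℕ → ℝ) (d : ℕ → ℝ) : Prop :=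
  ∀ t, bubble G f' k p d t = 0

/-- An equilibrium is asymptotically bubbly if `liminf_{t→∞} b_t > 0`. -/
def AsympBubbly (G : ℝ) (f' : ℝ → ℝ) (k p : ℕ → ℝ) (d : ℕ → ℝ) : Prop :=
  0 < atTop.liminf (bubble G f' k p d)

/-- Long-run dividend growth rate `G_d = limsup_{t→∞} D_t^{1/t}` (as an extended real). -/
def GdGrowth (G : ℝ) (d : ℕ → ℝ) : EReal :=
  atTop.limsup (fun t : ℕ => ((Dseq G d t ^ ((t : ℝ)⁻¹) : ℝ) : EReal))

/-- `x` solves the equation `G x + p = s(f(k) - k f'(k), f'(x))` with `x > 0`;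
when the solution exists it is unique and denoted `g(k,p)`. -/
def IsGsol (G : ℝ) (f f' : ℝ → ℝ) (s : ℝ → ℝ → ℝ) (k p x : ℝ) : Prop :=
  0 < x ∧ G * x + p = s (f k - k * f' k) (f' x)

/-- Set of positive steady states: `𝒦 = {k > 0 : g(k,0) = k}`. -/
def Ksteady (G : ℝ) (f f' : ℝ → ℝ) (s : ℝ → ℝ → ℝ) : Set ℝ :=
  {k : ℝ | 0 < k ∧ IsGsol G f f' s k 0 k}

/-- The equilibrium set `𝒫₀` of initial prices. -/
def P0set (G : ℝ) (f f' : ℝ → ℝ) (s : ℝ → ℝ → ℝ) (k0 : ℝ) (d : ℕ → ℝ) : Set ℝ :=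
  {p0 : ℝ | ∃ k p : ℕ → ℝ, IsEquilibrium G f f' s k0 d k p ∧ p 0 = p0}

/-- Lemma `lem:impossible1`: if `∑_{t≥1} d_t = ∞`, then every
equilibrium is bubbleless. -/
theorem stmt8 (G : ℝ) (f f' f'' : ℝ → ℝ) (s : ℝ → ℝ → ℝ)
    (hf : ProdAssump G f f' f'') (hs : SavAssump s)
    (k0 : ℝ) (hk0 : 0 < k0) (d : ℕ → ℝ) (hd : ∀ t ≥ 1, 0 ≤ d t)
    (hdiv : ¬ Summable (fun t : ℕ => d (t + 1))) :
    ∀ k p : ℕ → ℝ, IsEquilibrium G f f' s k0 d k p → Bubbleless G f' k p d := by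
  obtain ⟨hG, hfpos, hdf, hdf', -, hf'pos, hf''neg, -, Λ, hΛG, hΛ⟩ := hf
  obtain ⟨-, hsb, -, -⟩ := hs
  intro k p heq
  obtain ⟨hkpos, hppos, hk00, hcap, hprice⟩ := heq
  have hprodpos : ∀ t, 0 < ∏ i ∈ Finset.range t, f' (k (i + 1)) :=
    fun t => Finset.prod_pos (fun i _ => hf'pos _ (hkpos (i+1)))
  have hqpos : ∀ t, 0 < qseq f' k t := fun t => inv_pos.2 (hprodpos t)
  set Q : ℕ → ℝ := fun t => G ^ t * qseq f' k t with hQdef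
  have hQpos : ∀ t, 0 < Q t := fun t => mul_pos (pow_pos hG t) (hqpos t)
  set c : ℕ → ℝ := fun m => qseq f' k (m+1) * Dseq G d (m+1) with hcdef
  have hcnn : ∀ m, 0 ≤ c m := by
    intro m
    apply mul_nonneg (hqpos (m+1)).le
    exact mul_nonneg (pow_pos hG (m+1)).le (hd (m+1) (Nat.le_add_left 1 m))
  have hqsucc : ∀ t, qseq f' k (t+1) = qseq f' k t * (f' (k (t+1)))⁻¹ := by
    intro t
    simp [qseq, Finset.prod_range_succ, mul_inv, mul_comm]
  set a : ℕ → ℝ := fun t => Q t * p t with hadef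
  have harec : ∀ t, a (t+1) = a t - c t := by
    intro t
    have hR := hf'pos _ (hkpos (t+1))
    simp only [hadef, hcdef, hQdef, Dseq, hqsucc t, hprice t]
    field_simp
    ring
  have hasum : ∀ t, a t = p 0 - ∑ m ∈ Finset.range t, c m := by
    intro t
    induction t with
    | zero => simp [hadef, hQdef, qseq]
    | succ n ih => rw [harec n, ih, Finset.sum_range_succ]; ring
  have hann : ∀ t, 0 ≤ a t := fun t => mul_nonneg (hQpos t).le (hppos t)
  have hpartial : ∀ t, ∑ m ∈ Finset.range t, c m ≤ p 0 := by
    intro t; have h := hann t; rw [hasum t] at h; linarith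
  have hsumm : Summable c := summable_of_sum_range_le hcnn hpartial
  set S := ∑' m, c m with hSdef
  have hSle : S ≤ p 0 := Summable.tsum_le_of_sum_range_le hsumm hpartial
  set L := p 0 - S with hLdef
  have htail : ∀ t, (∑' n : ℕ, qseq f' k (t + 1 + n) * Dseq G d (t + 1 + n))
      = S - ∑ m ∈ Finset.range t, c m := by
    intro t
    have h1 : (fun n : ℕ => qseq f' k (t + 1 + n) * Dseq G d (t + 1 + n))
        = fun n : ℕ => c (n + t) := by
      funext n
      rw [show t + 1 + n = n + t + 1 from by omega]
    rw [h1]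
    have h2 := Summable.sum_add_tsum_nat_add t hsumm
    rw [← hSdef] at h2
    linarith
  have hbform : ∀ t, bubble G f' k p d t = (Q t)⁻¹ * L := by
    intro t
    have hQne : Q t ≠ 0 := (hQpos t).ne'
    have hpt : p t = (Q t)⁻¹ * a t := by
      simp only [hadef]
      field_simp
    unfold bubble fundval
    rw [htail t]
    rw [show ((G:ℝ)^t)⁻¹ * (qseq f' k t)⁻¹ = (Q t)⁻¹ by
      simp only [hQdef]; rw [mul_inv]]
    rw [hpt, hasum t, hLdef]
    ring
  have hL0 : 0 ≤ L := by rw [hLdef]; linarith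
  have hLeq : L = 0 := by
    by_contra hne
    have hLpos : 0 < L := lt_of_le_of_ne hL0 (Ne.symm hne)
    have hfSM := fmono f f' hdf hf'pos
    obtain ⟨K, hKG, hK0⟩ := ((hΛ.eventually_lt_const hΛG).and (eventually_gt_atTop 0)).exists
    have hfK := hf'pos K hK0
    have hfG : ∀ x, max K (f K / (G - f' K)) ≤ x → f x ≤ G * x := by
      intro x hx
      have hxK : K ≤ x := le_trans (le_max_left _ _) hx
      have h1 := lin_bound f f' f'' hdf hdf' hf''neg K hK0 x hxK
      have h2 : f K ≤ (G - f' K) * x := by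
        have h3 : f K / (G - f' K) ≤ x := le_trans (le_max_right _ _) hx
        rw [div_le_iff₀ (by linarith)] at h3
        linarith
      nlinarith [mul_pos hfK hK0]
    set M := max k0 (max K (f K / (G - f' K))) with hMdef
    have hM0 : 0 < M := lt_of_lt_of_le hk0 (le_max_left _ _)
    have hfM : f M ≤ G * M := hfG M (le_max_right _ _)
    have hwpos : ∀ t, 0 < f (k t) - k t * f' (k t) := fun t =>
      w_pos f f' f'' hfpos hdf hdf' hf'pos hf''neg (k t) (hkpos t)
    have hkM : ∀ t, k t ≤ M := by
      intro t
      induction t with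
      | zero => rw [hk00]; exact le_max_left _ _
      | succ n ih =>
        have hcapn := hcap n
        have hsb' := hsb _ (hwpos n) _ (hf'pos _ (hkpos (n+1)))
        have hfk : f (k n) ≤ f M := hfSM.monotoneOn (hkpos n) hM0 ih
        have hGk : G * k (n+1) < G * M := by
          linarith [hsb'.2, hppos n, mul_pos (hkpos n) (hf'pos _ (hkpos n))]
        exact le_of_lt (lt_of_mul_lt_mul_left hGk hG.le)
    have hpC : ∀ t, p t ≤ f M := by
      intro t
      have hcapn := hcap t
      have hsb' := hsb _ (hwpos t) _ (hf'pos _ (hkpos (t+1)))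
      have hfk : f (k t) ≤ f M := hfSM.monotoneOn (hkpos t) hM0 (hkM t)
      linarith [hsb'.2, mul_pos hG (hkpos (t+1)), mul_pos (hkpos t) (hf'pos _ (hkpos t))]
    have hC0 : 0 < f M := hfpos M hM0
    have hQb : ∀ t, L / f M ≤ Q t := by
      intro t
      have hfv : 0 ≤ fundval G f' k d t := by
        unfold fundval
        apply mul_nonneg (mul_nonneg (inv_nonneg.2 (pow_pos hG t).le) (inv_nonneg.2 (hqpos t).le))
        apply tsum_nonneg
        intro n
        apply mul_nonneg (hqpos _).le
        exact mul_nonneg (pow_pos hG _).le (hd _ (by omega))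
      have hble : (Q t)⁻¹ * L ≤ f M := by
        have hb := hbform t
        unfold bubble at hb
        linarith [hpC t]
      rw [div_le_iff₀ hC0]
      have h4 := mul_le_mul_of_nonneg_left hble (hQpos t).le
      rw [← mul_assoc, mul_inv_cancel₀ (hQpos t).ne', one_mul] at h4
      exact h4
    have hdsum : Summable (fun m => (L / f M) * d (m+1)) := by
      apply Summable.of_nonneg_of_le _ _ hsumm
      · intro m; exact mul_nonneg (div_pos hLpos hC0).le (hd _ (Nat.le_add_left 1 m))
      · intro m
        have hcm : c m = Q (m+1) * d (m+1) := by
          simp only [hcdef, hQdef, Dseq]; ring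
        rw [hcm]
        exact mul_le_mul_of_nonneg_right (hQb (m+1)) (hd _ (Nat.le_add_left 1 m))
    apply hdiv
    have h5 := hdsum.mul_left (f M / L)
    have h6 : (fun m => (f M / L) * ((L / f M) * d (m+1))) = fun m => d (m+1) := by
      funext m; field_simp
    rwa [h6] at h5
  unfold Bubbleless
  intro t
  rw [hbform t, hLeq, mul_zero]


end
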